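/- The visibility polynomial of the cycle C_n (n ≥ 3) is V(C_n) = 1 + n·x + C(n,2)·x² + r₃·x³, where r₃ = n(n²−1)/24 if n is odd and r₃ = (n−2)n(n+8)/24 if n is even; in particular the mutual-visibility number of C_n is 3. -/

import Mathlib

open SimpleGraph Polynomial

/-- Two vertices `u`, `v` are `X`-visible in `G` if some shortest `u`\u2013`v` path
has no internal vertex in `X`. -/
def SimpleGraph.XVisible {V : Type*} (G : SimpleGraph V) (X : Set V) (u v : V) : Prop :=
  ∃ p : G.Walk u v, p.IsPath ∧ p.length = G.dist u v ∧
    ∀ w ∈ p.support, w ∈ X → w = u ∨ w = v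

/-- `X` is a mutual-visibility set of `G`. -/
def SimpleGraph.IsMutualVisibilitySet {V : Type*} (G : SimpleGraph V) (X : Set V) : Prop :=
  ∀ u ∈ X, ∀ v ∈ X, G.XVisible X u v


open scoped Classical in
/-- The visibility polynomial `∑ r_i x^i`, where `r_i` is the number of
mutual-visibility sets of cardinality `i`. -/
noncomputable def visPoly {V : Type*} (G : SimpleGraph V) [Fintype V] : Polynomial ℤ :=
  ∑ X : Finset V, if G.IsMutualVisibilitySet ↑X then (Polynomial.X ^ X.card : Polynomial ℤ) else 0

namespace VisCycle

open Fin.NatCast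

/-! ### Nat mod helper -/

theorem mod2 {x n : ℕ} (hn : 0 < n) (h : x < 2*n) : x % n = if x < n then x else x - n := by
  split_ifs with h'
  · exact Nat.mod_eq_of_lt h'
  · rw [Nat.mod_eq_sub_mod (le_of_not_gt h'), Nat.mod_eq_of_lt (by omega)]

variable {n : ℕ} [NeZero n]

/-! ### Fin arithmetic toolkit -/

theorem npos : 0 < n := Nat.pos_of_ne_zero (NeZero.ne n)

theorem val_addCast (u : Fin n) (i : ℕ) : (u + (i : Fin n)).val = (u.val + i) % n := by
  rw [Fin.add_def]; simp [Fin.val_natCast, Nat.add_mod]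

theorem addCast_addCast (u : Fin n) (i j : ℕ) :
    (u + (i : Fin n)) + (j : Fin n) = u + ((i + j : ℕ) : Fin n) := by
  apply Fin.ext
  rw [val_addCast, val_addCast, val_addCast, Nat.mod_add_mod]
  congr 1; omega

theorem addCast_zero (u : Fin n) : u + ((0 : ℕ) : Fin n) = u := by
  apply Fin.ext; rw [val_addCast, Nat.add_zero]; exact Nat.mod_eq_of_lt u.isLt

theorem addCast_n (u : Fin n) : u + ((n : ℕ) : Fin n) = u := by
  apply Fin.ext; rw [val_addCast]
  rw [Nat.add_mod_right]; exact Nat.mod_eq_of_lt u.isLt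

theorem addCast_inj {u : Fin n} {i j : ℕ} (hi : i < n) (hj : j < n) :
    u + (i : Fin n) = u + (j : Fin n) ↔ i = j := by
  constructor
  · intro h
    have h2 := congrArg Fin.val h
    rw [val_addCast, val_addCast, mod2 npos (by omega), mod2 npos (by omega)] at h2
    have := u.isLt
    split_ifs at h2 <;> omega
  · rintro rfl; rfl

theorem sub_val (u v : Fin n) : (v - u).val = (n + v.val - u.val) % n := by
  rw [Fin.sub_def]
  show (n - u.val + v.val) % n = (n + v.val - u.val) % n
  congr 1
  have := u.isLt; omega

theorem sub_val_lt (u v : Fin n) : (v - u).val < n := (v - u).isLt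

theorem addCast_sub_val (u v : Fin n) : u + (((v - u).val : ℕ) : Fin n) = v := by
  apply Fin.ext
  rw [val_addCast, sub_val, Nat.add_mod_mod]
  have hu := u.isLt; have hv := v.isLt
  have h1 : u.val + (n + v.val - u.val) = n + v.val := by omega
  rw [h1, Nat.add_mod_left, Nat.mod_eq_of_lt hv]

theorem sub_val_addCast (u : Fin n) {i : ℕ} (hi : i < n) : ((u + (i : Fin n)) - u).val = i := by
  have h := addCast_sub_val u (u + (i : Fin n))
  exact (addCast_inj (sub_val_lt u (u + (i : Fin n))) hi).mp h

theorem sub_val_add_sub_val {u v : Fin n} (h : u ≠ v) :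
    (v - u).val + (u - v).val = n := by
  have h1 : u.val ≠ v.val := fun hh => h (Fin.ext hh)
  have hu := u.isLt; have hv := v.isLt
  rw [sub_val, sub_val, mod2 (x := n + v.val - u.val) npos (by omega),
    mod2 (x := n + u.val - v.val) npos (by omega)]
  split_ifs <;> omega

theorem sub_val_eq_zero {u v : Fin n} : (v - u).val = 0 ↔ u = v := by
  constructor
  · intro h
    have := addCast_sub_val u v
    rw [h] at this
    rw [← this, addCast_zero]
  · rintro rfl; simp

/-- difference of two offsets from same base -/
theorem sub_val_of_le {u a b : Fin n} (h : (a - u).val ≤ (b - u).val) :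
    (b - a).val = (b - u).val - (a - u).val := by
  have hu := u.isLt; have ha := a.isLt; have hb := b.isLt
  rw [sub_val, sub_val] at h ⊢
  rw [sub_val]
  rw [mod2 (x := n + a.val - u.val) npos (by omega),
    mod2 (x := n + b.val - u.val) npos (by omega)] at h
  rw [mod2 (x := n + b.val - a.val) npos (by omega),
    mod2 (x := n + a.val - u.val) npos (by omega),
    mod2 (x := n + b.val - u.val) npos (by omega)]
  split_ifs at h ⊢ <;> omega

/-! ### Arc walks -/

theorem cycle_adj_succ (hn : 3 ≤ n) (u : Fin n) : (cycleGraph n).Adj u (u + ((1 : ℕ) : Fin n)) := by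
  rw [cycleGraph_adj']
  right
  rw [sub_val_addCast u (by omega)]

/-- the walk `u, u+1, ..., u+k` -/
def arcWalk (hn : 3 ≤ n) (u : Fin n) : (k : ℕ) → (cycleGraph n).Walk u (u + (k : Fin n))
  | 0 => SimpleGraph.Walk.nil.copy rfl (addCast_zero u).symm
  | (k+1) => (SimpleGraph.Walk.cons (cycle_adj_succ hn u)
      (arcWalk hn (u + ((1:ℕ) : Fin n)) k)).copy rfl
        (by rw [addCast_addCast]; norm_num [Nat.add_comm])

theorem arcWalk_length (hn : 3 ≤ n) (u : Fin n) (k : ℕ) : (arcWalk hn u k).length = k := by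
  induction k generalizing u with
  | zero => simp [arcWalk]
  | succ k ih => simp [arcWalk, ih]

theorem arcWalk_support (hn : 3 ≤ n) (u : Fin n) (k : ℕ) :
    (arcWalk hn u k).support = (List.range (k+1)).map (fun i : ℕ => u + (i : Fin n)) := by
  induction k generalizing u with
  | zero =>
      rw [arcWalk, SimpleGraph.Walk.support_copy, SimpleGraph.Walk.support_nil]
      simp [List.range_succ]
  | succ k ih =>
      rw [arcWalk, SimpleGraph.Walk.support_copy, SimpleGraph.Walk.support_cons, ih]
      rw [List.range_succ_eq_map (n := k+1), List.map_cons, List.map_map]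
      congr 1
      · exact (addCast_zero u).symm
      · apply List.map_congr_left
        intro i _
        simp only [Function.comp_apply, Nat.succ_eq_add_one]
        rw [addCast_addCast]
        norm_num [Nat.add_comm]

theorem mem_arcWalk_support (hn : 3 ≤ n) (u : Fin n) (k : ℕ) (w : Fin n) :
    w ∈ (arcWalk hn u k).support ↔ ∃ i ≤ k, w = u + (i : Fin n) := by
  rw [arcWalk_support]
  simp only [List.mem_map, List.mem_range]
  constructor
  · rintro ⟨i, hi, rfl⟩; exact ⟨i, by omega, rfl⟩
  · rintro ⟨i, hi, rfl⟩; exact ⟨i, by omega, rfl⟩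

theorem arcWalk_isPath (hn : 3 ≤ n) (u : Fin n) {k : ℕ} (hk : k < n) :
    (arcWalk hn u k).IsPath := by
  rw [SimpleGraph.Walk.isPath_def, arcWalk_support]
  apply List.Nodup.map_on _ (List.nodup_range)
  intro i hi j hj hij
  rw [List.mem_range] at hi hj
  exact (addCast_inj (by omega) (by omega)).mp hij

theorem addCast_reduce (u : Fin n) (j : ℕ) : u + ((n + j : ℕ) : Fin n) = u + (j : Fin n) := by
  rw [← addCast_addCast, addCast_n]

theorem list_shift (u : Fin n) (k : ℕ) :
    (List.range (k+2)).map (fun i : ℕ => u + (i : Fin n))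
      = u :: (List.range (k+1)).map (fun i : ℕ => (u + ((1:ℕ) : Fin n)) + (i : Fin n)) := by
  rw [List.range_succ_eq_map (n := k+1), List.map_cons, List.map_map]
  congr 1
  · exact addCast_zero u
  · apply List.map_congr_left
    intro i _
    simp only [Function.comp_apply, Nat.succ_eq_add_one]
    rw [addCast_addCast]
    norm_num [Nat.add_comm]

theorem list_shift_back (u : Fin n) {k : ℕ} (hk : k + 1 < n) :
    (List.range (k+2)).map (fun i : ℕ => u + ((n - i : ℕ) : Fin n))
      = u :: (List.range (k+1)).map
          (fun i : ℕ => (u + ((n-1:ℕ) : Fin n)) + ((n - i : ℕ) : Fin n)) := by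
  rw [List.range_succ_eq_map (n := k+1), List.map_cons, List.map_map]
  congr 1
  · rw [Nat.sub_zero]; exact addCast_n u
  · apply List.map_congr_left
    intro i hi
    rw [List.mem_range] at hi
    simp only [Function.comp_apply, Nat.succ_eq_add_one]
    rw [addCast_addCast]
    have h1 : (n - 1) + (n - i) = n + (n - (i+1)) := by omega
    rw [h1, addCast_reduce]

/-! ### Path classification -/

theorem path_classify (hn : 3 ≤ n) {u v : Fin n} (p : (cycleGraph n).Walk u v) (hp : p.IsPath) :
    ∃ k : ℕ, k < n ∧ p.length = k ∧
      ((v = u + (k : Fin n) ∧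
          p.support = (List.range (k+1)).map (fun i : ℕ => u + (i : Fin n))) ∨
       (v = u + ((n - k : ℕ) : Fin n) ∧
          p.support = (List.range (k+1)).map (fun i : ℕ => u + ((n - i : ℕ) : Fin n)))) := by
  induction p with
  | nil =>
      refine ⟨0, by omega, rfl, Or.inl ⟨(addCast_zero _).symm, ?_⟩⟩
      simp [List.range_succ]
  | @cons u w v h q ih =>
      rw [SimpleGraph.Walk.cons_isPath_iff] at hp
      obtain ⟨hq, hu⟩ := hp
      obtain ⟨k, hk, hlen, hcase⟩ := ih hq
      rw [cycleGraph_adj'] at h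
      have hcases : w = u + ((1:ℕ) : Fin n) ∨ u = w + ((1:ℕ) : Fin n) := by
        rcases h with h | h
        · right; rw [← h]; exact (addCast_sub_val w u).symm
        · left; rw [← h]; exact (addCast_sub_val u w).symm
      rcases hcases with hw | hw
      · -- w = u + 1
        rcases hcase with ⟨hv, hsup⟩ | ⟨hv, hsup⟩
        · -- forward : extend
          have hk1 : k + 1 < n := by
            by_contra hc
            have hkn : k = n - 1 := by omega
            apply hu
            rw [hsup]
            refine List.mem_map.mpr ⟨n - 1, List.mem_range.mpr (by omega), ?_⟩
            rw [hw, addCast_addCast]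
            have : 1 + (n - 1) = n := by omega
            rw [this, addCast_n]
          refine ⟨k + 1, hk1, by simp [hlen], Or.inl ⟨?_, ?_⟩⟩
          · rw [hv, hw, addCast_addCast]
            norm_num [Nat.add_comm]
          · rw [SimpleGraph.Walk.support_cons, hsup, list_shift, hw]
        · -- backward from w : must have k = 0
          have hk0 : k = 0 := by
            by_contra hc
            apply hu
            rw [hsup]
            refine List.mem_map.mpr ⟨1, List.mem_range.mpr (by omega), ?_⟩
            rw [hw, addCast_addCast]
            have : 1 + (n - 1) = n := by omega
            rw [this, addCast_n]
          subst hk0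
          have hvw : v = w := by rw [hv, Nat.sub_zero, addCast_n]
          refine ⟨1, by omega, by simp [hlen], Or.inl ⟨?_, ?_⟩⟩
          · rw [hvw, hw]
          · rw [SimpleGraph.Walk.support_cons, hsup]
            simp only [List.range_succ, List.range_zero]
            simp only [List.nil_append, List.cons_append, List.map_cons, List.map_nil]
            rw [Nat.sub_zero, addCast_n, addCast_zero, ← hw]
      · -- u = w + 1, i.e. w = u + (n-1)
        have hwu : w = u + ((n - 1 : ℕ) : Fin n) := by
          rw [hw, addCast_addCast]
          have : 1 + (n - 1) = n := by omega
          rw [this, addCast_n]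
        rcases hcase with ⟨hv, hsup⟩ | ⟨hv, hsup⟩
        · -- forward from w : must have k = 0
          have hk0 : k = 0 := by
            by_contra hc
            apply hu
            rw [hsup]
            exact List.mem_map.mpr ⟨1, List.mem_range.mpr (by omega), hw.symm⟩
          subst hk0
          have hvw : v = w := by rw [hv, addCast_zero]
          refine ⟨1, by omega, by simp [hlen], Or.inr ⟨?_, ?_⟩⟩
          · rw [hvw, hwu]
          · rw [SimpleGraph.Walk.support_cons, hsup]
            simp only [List.range_succ, List.range_zero]
            simp only [List.nil_append, List.cons_append, List.map_cons, List.map_nil]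
            rw [addCast_zero, Nat.sub_zero, addCast_n, ← hwu]
        · -- backward from w : extend
          have hk1 : k + 1 < n := by
            by_contra hc
            have hkn : k = n - 1 := by omega
            apply hu
            rw [hsup]
            refine List.mem_map.mpr ⟨n - 1, List.mem_range.mpr (by omega), ?_⟩
            have h2 : n - (n - 1) = 1 := by omega
            rw [h2, ← hw]
          refine ⟨k + 1, hk1, by simp [hlen], Or.inr ⟨?_, ?_⟩⟩
          · rw [hv, hwu, addCast_addCast]
            have : (n - 1) + (n - k) = n + (n - (k+1)) := by omega
            rw [this, addCast_reduce]
          · rw [SimpleGraph.Walk.support_cons, hsup, list_shift_back u hk1, hwu]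

/-! ### Distance -/

theorem cycle_reachable (hn : 3 ≤ n) (u v : Fin n) : (cycleGraph n).Reachable u v :=
  ⟨(arcWalk hn u ((v - u).val)).copy rfl (addCast_sub_val u v)⟩

theorem addCast_ne (u : Fin n) {i j : ℕ} (hi : i < n) (hj : j < n) (hij : i ≠ j) :
    u + (i : Fin n) ≠ u + (j : Fin n) := fun h => hij ((addCast_inj hi hj).mp h)

theorem ne_addCast (u : Fin n) {j : ℕ} (hj : j < n) (h0 : j ≠ 0) :
    u ≠ u + (j : Fin n) := by
  conv_lhs => rw [← addCast_zero u]
  exact addCast_ne u npos hj (by omega)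

theorem cycle_dist (hn : 3 ≤ n) (u v : Fin n) :
    (cycleGraph n).dist u v = min (v - u).val (u - v).val := by
  by_cases huv : u = v
  · subst huv; simp [SimpleGraph.dist_self]
  apply le_antisymm
  · apply le_min
    · have h1 := SimpleGraph.dist_le ((arcWalk hn u ((v - u).val)).copy rfl (addCast_sub_val u v))
      rwa [SimpleGraph.Walk.length_copy, arcWalk_length] at h1
    · have h1 := SimpleGraph.dist_le
        (((arcWalk hn v ((u - v).val)).copy rfl (addCast_sub_val v u)).reverse)
      rwa [SimpleGraph.Walk.length_reverse, SimpleGraph.Walk.length_copy, arcWalk_length] at h1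
  · obtain ⟨p, hp, hlen⟩ := (cycle_reachable hn u v).exists_path_of_dist
    obtain ⟨k, hk, hpk, hcase⟩ := path_classify hn p hp
    rcases hcase with ⟨hv, _⟩ | ⟨hv, _⟩
    · have hkval : k = (v - u).val := by
        have h2 := addCast_sub_val u v
        exact (addCast_inj hk (sub_val_lt u v)).mp (by rw [← hv, h2])
      rw [← hlen, hpk, hkval]
      exact min_le_left _ _
    · have hk1 : 1 ≤ k := by
        by_contra hc
        have : k = 0 := by omega
        subst this
        rw [Nat.sub_zero, addCast_n] at hv
        exact huv hv.symm
      have hkval : (v - u).val = n - k := by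
        have h2 := addCast_sub_val u v
        exact (addCast_inj (sub_val_lt u v) (by omega)).mp (by rw [← hv, h2])
      have hkval2 : (u - v).val = k := by
        have := sub_val_add_sub_val huv
        omega
      rw [← hlen, hpk, ← hkval2]
      exact min_le_right _ _

/-! ### Visibility lemmas -/

theorem xvisible_refl (hn : 3 ≤ n) (X : Set (Fin n)) (u : Fin n) :
    (cycleGraph n).XVisible X u u := by
  refine ⟨SimpleGraph.Walk.nil, SimpleGraph.Walk.IsPath.nil, SimpleGraph.dist_self.symm, ?_⟩
  intro w hw _
  simp at hw; exact Or.inl hw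

theorem xvisible_symm {X : Set (Fin n)} {u v : Fin n}
    (h : (cycleGraph n).XVisible X u v) : (cycleGraph n).XVisible X v u := by
  obtain ⟨p, hp, hl, hs⟩ := h
  refine ⟨p.reverse, hp.reverse, ?_, ?_⟩
  · rw [SimpleGraph.Walk.length_reverse, hl, SimpleGraph.dist_comm]
  · intro w hw hX
    rw [SimpleGraph.Walk.support_reverse, List.mem_reverse] at hw
    exact (hs w hw hX).symm

/-- forward arc visibility -/
theorem xvisible_arc (hn : 3 ≤ n) (X : Set (Fin n)) (u : Fin n) (k : ℕ)
    (hk2 : 2 * k ≤ n) (hint : ∀ i, 0 < i → i < k → u + (i : Fin n) ∉ X) :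
    (cycleGraph n).XVisible X u (u + (k : Fin n)) := by
  rcases Nat.eq_zero_or_pos k with hk0 | hk0
  · subst hk0
    have h0 : ((0:ℕ) : Fin n) = (((0:ℕ)) : Fin n) := rfl
    rw [show u + ((0:ℕ) : Fin n) = u from addCast_zero u]
    exact xvisible_refl hn X u
  have hkn : k < n := by omega
  have hne : u ≠ u + (k : Fin n) := ne_addCast u hkn (by omega)
  refine ⟨arcWalk hn u k, arcWalk_isPath hn u hkn, ?_, ?_⟩
  · rw [arcWalk_length, cycle_dist hn]
    have h1 : ((u + (k : Fin n)) - u).val = k := sub_val_addCast u hkn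
    have h2 : (u - (u + (k : Fin n))).val = n - k := by
      have := sub_val_add_sub_val hne
      omega
    rw [h1, h2]
    omega
  · intro w hw hwX
    rw [mem_arcWalk_support] at hw
    obtain ⟨i, hik, rfl⟩ := hw
    rcases Nat.eq_zero_or_pos i with hi0 | hi0
    · subst hi0; left; exact addCast_zero u
    rcases Nat.lt_or_ge i k with hik' | hik'
    · exact absurd hwX (hint i hi0 hik')
    · right
      have : i = k := by omega
      subst this; rfl

/-- if the backward arc is blocked and the forward arc is not shortest, not visible -/
theorem not_xvisible_back_blocked (hn : 3 ≤ n) (X : Set (Fin n)) {u v y : Fin n} {j : ℕ}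
    (hy : y ∈ X) (hyu : y ≠ u) (hyv : y ≠ v)
    (hyj : y = u + ((n - j : ℕ) : Fin n)) (hj0 : 0 < j) (hjk : j < (u - v).val)
    (hdist : (cycleGraph n).dist u v < (v - u).val) :
    ¬ (cycleGraph n).XVisible X u v := by
  rintro ⟨p, hp, hlen, hs⟩
  have huv : u ≠ v := by
    intro h; subst h; simp [sub_val_eq_zero.mpr rfl] at hjk
  obtain ⟨k, hk, hpk, hcase⟩ := path_classify hn p hp
  rcases hcase with ⟨hv, hsup⟩ | ⟨hv, hsup⟩
  · have hkval : k = (v - u).val :=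
      (addCast_inj hk (sub_val_lt u v)).mp (by rw [← hv, addCast_sub_val u v])
    omega
  · have hk1 : 1 ≤ k := by
      by_contra hc
      have : k = 0 := by omega
      subst this
      rw [Nat.sub_zero, addCast_n] at hv
      exact huv hv.symm
    have hkval : (v - u).val = n - k :=
      (addCast_inj (sub_val_lt u v) (by omega)).mp (by rw [← hv, addCast_sub_val u v])
    have hkval2 : (u - v).val = k := by
      have := sub_val_add_sub_val huv
      omega
    have hmem : y ∈ p.support := by
      rw [hsup]
      exact List.mem_map.mpr ⟨j, List.mem_range.mpr (by omega), hyj.symm⟩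
    rcases hs y hmem hy with h | h
    · exact hyu h
    · exact hyv h

/-- if both arcs are blocked, not visible -/
theorem not_xvisible_both_blocked (hn : 3 ≤ n) (X : Set (Fin n)) {u v x y : Fin n} {i j : ℕ}
    (hx : x ∈ X) (hxu : x ≠ u) (hxv : x ≠ v)
    (hxi : x = u + (i : Fin n)) (hi0 : 0 < i) (hik : i < (v - u).val)
    (hy : y ∈ X) (hyu : y ≠ u) (hyv : y ≠ v)
    (hyj : y = u + ((n - j : ℕ) : Fin n)) (hj0 : 0 < j) (hjk : j < (u - v).val) :
    ¬ (cycleGraph n).XVisible X u v := by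
  rintro ⟨p, hp, hlen, hs⟩
  have huv : u ≠ v := by
    intro h; subst h; simp [sub_val_eq_zero.mpr rfl] at hjk
  obtain ⟨k, hk, hpk, hcase⟩ := path_classify hn p hp
  rcases hcase with ⟨hv, hsup⟩ | ⟨hv, hsup⟩
  · have hkval : k = (v - u).val :=
      (addCast_inj hk (sub_val_lt u v)).mp (by rw [← hv, addCast_sub_val u v])
    have hmem : x ∈ p.support := by
      rw [hsup]
      exact List.mem_map.mpr ⟨i, List.mem_range.mpr (by omega), hxi.symm⟩
    rcases hs x hmem hx with h | h
    · exact hxu h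
    · exact hxv h
  · have hk1 : 1 ≤ k := by
      by_contra hc
      have : k = 0 := by omega
      subst this
      rw [Nat.sub_zero, addCast_n] at hv
      exact huv hv.symm
    have hkval : (v - u).val = n - k :=
      (addCast_inj (sub_val_lt u v) (by omega)).mp (by rw [← hv, addCast_sub_val u v])
    have hkval2 : (u - v).val = k := by
      have := sub_val_add_sub_val huv
      omega
    have hmem : y ∈ p.support := by
      rw [hsup]
      exact List.mem_map.mpr ⟨j, List.mem_range.mpr (by omega), hyj.symm⟩
    rcases hs y hmem hy with h | h
    · exact hyu h
    · exact hyv h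

/-! ### Mutual visibility: small and large sets -/

theorem mv_of_card_le_two (hn : 3 ≤ n) (X : Finset (Fin n)) (h : X.card ≤ 2) :
    (cycleGraph n).IsMutualVisibilitySet ↑X := by
  intro u hu v hv
  by_cases huv : u = v
  · subst huv; exact xvisible_refl hn _ u
  have hXuv : X = {u, v} := by
    symm
    apply Finset.eq_of_subset_of_card_le
    · intro w hw
      rcases Finset.mem_insert.mp hw with rfl | hw
      · exact hu
      · rw [Finset.mem_singleton] at hw; subst hw; exact hv
    · rw [Finset.card_pair huv]; exact h
  obtain ⟨p, hp, hlen⟩ := (cycle_reachable hn u v).exists_path_of_dist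
  refine ⟨p, hp, hlen, ?_⟩
  intro w _ hwX
  rw [hXuv] at hwX
  simpa using hwX

theorem card_le_three_of_mv (hn : 3 ≤ n) (X : Finset (Fin n))
    (h : (cycleGraph n).IsMutualVisibilitySet ↑X) : X.card ≤ 3 := by
  by_contra hc
  push_neg at hc
  obtain ⟨u, hu⟩ := Finset.card_pos.mp (by omega : 0 < X.card)
  set Y := X.erase u with hY
  have hYcard : 3 ≤ Y.card := by
    have h5 := Finset.card_erase_of_mem hu
    rw [← hY] at h5
    omega
  have hYne : Y.Nonempty := Finset.card_pos.mp (by omega)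
  obtain ⟨a, haY, hamin⟩ := Y.exists_min_image (fun w => (w - u).val) hYne
  obtain ⟨b, hbY, hbmax⟩ := Y.exists_max_image (fun w => (w - u).val) hYne
  have hcne : ((Y.erase a).erase b).Nonempty := by
    apply Finset.card_pos.mp
    have h1 := Finset.card_erase_le (s := Y.erase a) (a := b)
    have h2 := Finset.card_erase_of_mem haY
    have h3 := Finset.card_erase_le (s := Y) (a := a)
    have h4 : ((Y.erase a).erase b).card ≥ (Y.erase a).card - 1 := Finset.pred_card_le_card_erase
    omega
  obtain ⟨c, hc'⟩ := hcne
  have hcb : c ≠ b := (Finset.mem_erase.mp hc').1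
  have hca : c ≠ a := (Finset.mem_erase.mp (Finset.mem_erase.mp hc').2).1
  have hcY : c ∈ Y := (Finset.mem_erase.mp (Finset.mem_erase.mp hc').2).2
  -- injectivity-driven strict inequalities
  have hrep : ∀ w : Fin n, w = u + (((w - u).val : ℕ) : Fin n) := fun w => (addCast_sub_val u w).symm
  have hinj : ∀ w₁ w₂ : Fin n, (w₁ - u).val = (w₂ - u).val → w₁ = w₂ := by
    intro w₁ w₂ hh
    rw [hrep w₁, hrep w₂, hh]
  have hac : (a - u).val < (c - u).val :=
    lt_of_le_of_ne (hamin c hcY) (fun hh => hca (hinj c a hh.symm))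
  have hcbval : (c - u).val < (b - u).val :=
    lt_of_le_of_ne (hbmax c hcY) (fun hh => hcb (hinj c b hh))
  have hau : a ≠ u := Finset.ne_of_mem_erase haY
  have hbu : b ≠ u := Finset.ne_of_mem_erase hbY
  have hfa : 0 < (a - u).val := by
    rcases Nat.eq_zero_or_pos (a - u).val with hh | hh
    · exact absurd (sub_val_eq_zero.mp hh).symm hau
    · exact hh
  have hab : a ≠ b := by
    intro hh; rw [hh] at hac; omega
  have hba : (b - a).val = (b - u).val - (a - u).val := sub_val_of_le (le_of_lt (by omega))
  have hcaval : (c - a).val = (c - u).val - (a - u).val := sub_val_of_le (le_of_lt hac)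
  have habval : (a - b).val = n - (b - a).val := by
    have := sub_val_add_sub_val hab
    omega
  have hbn := (b - u).isLt
  have haX : a ∈ X := by rw [hY] at haY; exact Finset.mem_of_mem_erase haY
  have hbX : b ∈ X := by rw [hY] at hbY; exact Finset.mem_of_mem_erase hbY
  have hcX : c ∈ X := by rw [hY] at hcY; exact Finset.mem_of_mem_erase hcY
  have hyj : u = a + ((n - (a - u).val : ℕ) : Fin n) := by
    have h7 := addCast_addCast u ((a - u).val) (n - (a - u).val)
    rw [show (a - u).val + (n - (a - u).val) = n from by have := (a - u).isLt; omega,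
      addCast_n, addCast_sub_val u a] at h7
    exact h7.symm
  exact not_xvisible_both_blocked hn (↑X : Set (Fin n)) (u := a) (v := b)
    (x := c) (i := (c - a).val) (y := u) (j := (a - u).val)
    (Finset.mem_coe.mpr hcX) hca hcb (addCast_sub_val a c).symm
    (by omega) (by omega)
    (Finset.mem_coe.mpr hu) (Ne.symm hau) (Ne.symm hbu) hyj hfa (by omega)
    (h a (Finset.mem_coe.mpr haX) b (Finset.mem_coe.mpr hbX))

/-! ### Triple sets -/

def triple (a : Fin n) (p q : ℕ) : Finset (Fin n) := {a, a + (p : Fin n), a + ((p + q : ℕ) : Fin n)}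

theorem triple_card (hn : 3 ≤ n) (a : Fin n) {p q : ℕ} (hp : 1 ≤ p) (hq : 1 ≤ q)
    (hpq : p + q < n) : (triple a p q).card = 3 := by
  have h1 : a ≠ a + (p : Fin n) := ne_addCast a (by omega) (by omega)
  have h2 : a ≠ a + ((p + q : ℕ) : Fin n) := ne_addCast a (by omega) (by omega)
  have h3 : a + (p : Fin n) ≠ a + ((p + q : ℕ) : Fin n) :=
    addCast_ne a (by omega) (by omega) (by omega)
  rw [triple, Finset.card_insert_of_notMem
      (by rw [Finset.mem_insert, Finset.mem_singleton]; push_neg; exact ⟨h1, h2⟩),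
    Finset.card_insert_of_notMem (by rw [Finset.mem_singleton]; exact h3),
    Finset.card_singleton]

theorem triple_rot (hn : 3 ≤ n) (a : Fin n) {p q : ℕ} (hp : 1 ≤ p) (hq : 1 ≤ q)
    (hpq : p + q < n) :
    triple a p q = triple (a + (p : Fin n)) q (n - p - q) := by
  unfold triple
  rw [addCast_addCast, addCast_addCast,
    show p + (q + (n - p - q)) = n from by omega, addCast_n]
  ext x
  simp only [Finset.mem_insert, Finset.mem_singleton]
  tauto

theorem triple_mv (hn : 3 ≤ n) (a : Fin n) {p q : ℕ} (hp : 1 ≤ p) (hq : 1 ≤ q)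
    (hpq : p + q < n) (h1 : 2*p ≤ n) (h2 : 2*q ≤ n) (h3 : 2*(n-p-q) ≤ n) :
    (cycleGraph n).IsMutualVisibilitySet ↑(triple a p q) := by
  have vis1 : (cycleGraph n).XVisible ↑(triple a p q) a (a + (p : Fin n)) := by
    apply xvisible_arc hn _ a p h1
    intro i hi0 hip hmem
    simp only [triple, Finset.coe_insert, Set.mem_insert_iff, Finset.coe_singleton,
      Set.mem_singleton_iff] at hmem
    rcases hmem with hh | hh | hh
    · exact ne_addCast a (by omega) (by omega) hh.symm
    · exact addCast_ne a (by omega) (by omega) (by omega) hh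
    · exact addCast_ne a (by omega) (by omega) (by omega) hh
  have vis2 : (cycleGraph n).XVisible ↑(triple a p q) (a + (p : Fin n))
      (a + ((p + q : ℕ) : Fin n)) := by
    have hv := xvisible_arc hn ↑(triple a p q) (a + (p : Fin n)) q h2 ?_
    · rwa [addCast_addCast] at hv
    · intro i hi0 hiq hmem
      rw [addCast_addCast] at hmem
      simp only [triple, Finset.coe_insert, Set.mem_insert_iff, Finset.coe_singleton,
        Set.mem_singleton_iff] at hmem
      rcases hmem with hh | hh | hh
      · exact ne_addCast a (by omega) (by omega) hh.symm
      · exact addCast_ne a (by omega) (by omega) (by omega) hh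
      · exact addCast_ne a (by omega) (by omega) (by omega) hh
  have vis3 : (cycleGraph n).XVisible ↑(triple a p q) (a + ((p + q : ℕ) : Fin n)) a := by
    have hv := xvisible_arc hn ↑(triple a p q) (a + ((p + q : ℕ) : Fin n)) (n - p - q) h3 ?_
    · rwa [addCast_addCast, show (p + q) + (n - p - q) = n from by omega, addCast_n] at hv
    · intro i hi0 hir hmem
      rw [addCast_addCast] at hmem
      simp only [triple, Finset.coe_insert, Set.mem_insert_iff, Finset.coe_singleton,
        Set.mem_singleton_iff] at hmem
      rcases hmem with hh | hh | hh
      · exact ne_addCast a (by omega) (by omega) hh.symm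
      · exact addCast_ne a (by omega) (by omega) (by omega) hh
      · exact addCast_ne a (by omega) (by omega) (by omega) hh
  intro x hx y hy
  simp only [triple, Finset.coe_insert, Set.mem_insert_iff, Finset.coe_singleton,
    Set.mem_singleton_iff] at hx hy
  rcases hx with rfl | rfl | rfl <;> rcases hy with rfl | rfl | rfl
  · exact xvisible_refl hn _ _
  · exact vis1
  · exact xvisible_symm vis3
  · exact xvisible_symm vis1
  · exact xvisible_refl hn _ _
  · exact vis2
  · exact vis3
  · exact xvisible_symm vis2
  · exact xvisible_refl hn _ _

theorem triple_not_mv (hn : 3 ≤ n) (a : Fin n) {p q : ℕ} (hp : 1 ≤ p) (hq : 1 ≤ q)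
    (hpq : p + q < n) (h1 : n < 2*p) :
    ¬ (cycleGraph n).IsMutualVisibilitySet ↑(triple a p q) := by
  intro hMV
  have hvu : ((a + (p : Fin n)) - a).val = p := sub_val_addCast a (by omega)
  have hne : a ≠ a + (p : Fin n) := ne_addCast a (by omega) (by omega)
  have hsub : (a - (a + (p : Fin n))).val = n - p := by
    have := sub_val_add_sub_val hne
    omega
  have hy : (a + ((p + q : ℕ) : Fin n)) ∈ (↑(triple a p q) : Set (Fin n)) := by
    simp [triple]
  have ha : a ∈ (↑(triple a p q) : Set (Fin n)) := by simp [triple]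
  have hb : (a + (p : Fin n)) ∈ (↑(triple a p q) : Set (Fin n)) := by simp [triple]
  refine not_xvisible_back_blocked hn ↑(triple a p q) (u := a) (v := a + (p : Fin n))
    (y := a + ((p + q : ℕ) : Fin n)) (j := n - p - q)
    hy ((ne_addCast a (by omega) (by omega)).symm)
    (addCast_ne a (by omega) (by omega) (by omega)) ?_ (by omega) ?_ ?_
    (hMV a ha (a + (p : Fin n)) hb)
  · rw [show n - (n - p - q) = p + q from by omega]
  · rw [hsub]; omega
  · rw [cycle_dist hn, hvu, hsub]; omega

theorem triple_mv_iff (hn : 3 ≤ n) (a : Fin n) {p q : ℕ} (hp : 1 ≤ p) (hq : 1 ≤ q)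
    (hpq : p + q < n) :
    (cycleGraph n).IsMutualVisibilitySet ↑(triple a p q) ↔
      (2*p ≤ n ∧ 2*q ≤ n ∧ 2*(n-p-q) ≤ n) := by
  constructor
  · intro hMV
    refine ⟨?_, ?_, ?_⟩
    · by_contra hc; exact triple_not_mv hn a hp hq hpq (by omega) hMV
    · by_contra hc
      rw [triple_rot hn a hp hq hpq] at hMV
      exact triple_not_mv hn (a + (p : Fin n)) hq (by omega) (by omega) (by omega) hMV
    · by_contra hc
      rw [triple_rot hn a hp hq hpq,
        triple_rot hn (a + (p : Fin n)) hq (by omega) (by omega)] at hMV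
      have h4 := triple_not_mv hn ((a + (p : Fin n)) + (q : Fin n))
        (p := n - p - q) (q := n - q - (n - p - q)) (by omega) (by omega) (by omega)
        (by omega)
      exact h4 hMV
  · rintro ⟨h1, h2, h3⟩
    exact triple_mv hn a hp hq hpq h1 h2 h3

/-! ### Counting -/

def Tset (n : ℕ) : Finset (ℕ × ℕ) :=
  (Finset.Icc 1 (n/2)).biUnion (fun p =>
    (Finset.Icc (max 1 (n - n/2 - p)) (min (n/2) (n - 1 - p))).image (fun q => (p, q)))

theorem mem_Tset {n : ℕ} (hn : 3 ≤ n) (p q : ℕ) :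
    (p, q) ∈ Tset n ↔
      1 ≤ p ∧ 1 ≤ q ∧ p + q < n ∧ 2*p ≤ n ∧ 2*q ≤ n ∧ 2*(n-p-q) ≤ n := by
  simp only [Tset, Finset.mem_biUnion, Finset.mem_image, Finset.mem_Icc, Prod.mk.injEq]
  constructor
  · rintro ⟨p', ⟨hp1, hp2⟩, q', ⟨hq1, hq2⟩, rfl, rfl⟩
    omega
  · intro h
    exact ⟨p, ⟨by omega, by omega⟩, q, ⟨by omega, by omega⟩, rfl, rfl⟩

theorem gauss (k : ℕ) : (∑ i ∈ Finset.Icc 1 k, i) * 2 = k * (k+1) := by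
  induction k with
  | zero => simp
  | succ k ih =>
      rw [Finset.sum_Icc_succ_top (by omega), Nat.add_mul, ih]
      ring

theorem Tset_card_sum (n : ℕ) (hn : 3 ≤ n) :
    (Tset n).card = ∑ p ∈ Finset.Icc 1 (n/2),
      (min (n/2) (n - 1 - p) + 1 - max 1 (n - n/2 - p)) := by
  rw [Tset, Finset.card_biUnion]
  · apply Finset.sum_congr rfl
    intro p _
    rw [Finset.card_image_of_injective _ (fun q q' h => by simpa using h), Nat.card_Icc]
  · intro x _ y _ hxy
    rw [Function.onFun, Finset.disjoint_left]
    rintro ⟨a, b⟩ ha hb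
    simp only [Finset.mem_image, Finset.mem_Icc, Prod.mk.injEq] at ha hb
    obtain ⟨_, _, rfl, _⟩ := ha
    obtain ⟨_, _, rfl, _⟩ := hb
    exact hxy rfl

theorem Tset_card_odd {n k : ℕ} (hk : 1 ≤ k) (hnk : n = 2*k+1) :
    2 * (Tset n).card = k * (k+1) := by
  subst hnk
  rw [Tset_card_sum _ (by omega)]
  have hdiv : (2*k+1)/2 = k := by omega
  rw [hdiv]
  have hcongr : ∀ p ∈ Finset.Icc 1 k,
      (min k (2*k+1 - 1 - p) + 1 - max 1 (2*k+1 - k - p)) = p := by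
    intro p hp
    rw [Finset.mem_Icc] at hp
    omega
  rw [Finset.sum_congr rfl hcongr, Nat.mul_comm, gauss]

theorem Tset_card_even {n k : ℕ} (hk : 2 ≤ k) (hnk : n = 2*k) :
    2 * (Tset n).card = (k-1) * (k+4) := by
  subst hnk
  rw [Tset_card_sum _ (by omega)]
  have hdiv : (2*k)/2 = k := by omega
  rw [hdiv]
  obtain ⟨j, rfl⟩ : ∃ j, k = j + 2 := ⟨k - 2, by omega⟩
  rw [show j + 2 = (j+1) + 1 from rfl, Finset.sum_Icc_succ_top (by omega)]
  have hcongr : ∀ p ∈ Finset.Icc 1 (j+1),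
      (min ((j+1)+1) (2*((j+1)+1) - 1 - p) + 1 - max 1 (2*((j+1)+1) - ((j+1)+1) - p))
        = p + 1 := by
    intro p hp
    rw [Finset.mem_Icc] at hp
    omega
  rw [Finset.sum_congr rfl hcongr, Finset.sum_add_distrib, Finset.sum_const, Nat.card_Icc]
  have hg : (∑ i ∈ Finset.Icc 1 (j+1), i) * 2 = (j+1)*(j+2) := by
    rw [gauss (j+1)]
  have hlast : (min ((j+1)+1) (2*((j+1)+1) - 1 - ((j+1)+1)) + 1
      - max 1 (2*((j+1)+1) - ((j+1)+1) - ((j+1)+1))) = j + 1 := by omega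
  rw [hlast, smul_eq_mul]
  have h1 : j + 1 + 1 - 1 = j + 1 := by omega
  rw [h1]
  have hexp : (j+1) * (j+1+1+4) = (j+1)*(j+2) + 4*(j+1) := by ring
  omega

open scoped Classical in
theorem count3 {n : ℕ} [NeZero n] (hn : 3 ≤ n) :
    3 * (Finset.univ.filter (fun X : Finset (Fin n) =>
      X.card = 3 ∧ (cycleGraph n).IsMutualVisibilitySet ↑X)).card = n * (Tset n).card := by
  set M := Finset.univ.filter (fun X : Finset (Fin n) =>
      X.card = 3 ∧ (cycleGraph n).IsMutualVisibilitySet ↑X) with hM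
  set S := (Finset.univ : Finset (Fin n)) ×ˢ Tset n with hS
  have hmap : ∀ s ∈ S, triple s.1 s.2.1 s.2.2 ∈ M := by
    rintro ⟨a, p, q⟩ hs
    rw [hS, Finset.mem_product] at hs
    obtain ⟨h1, h2, h3, h4, h5, h6⟩ := (mem_Tset hn p q).mp hs.2
    rw [hM, Finset.mem_filter]
    exact ⟨Finset.mem_univ _, triple_card hn a h1 h2 h3,
      triple_mv hn a h1 h2 h3 h4 h5 h6⟩
  have hfib := Finset.card_eq_sum_card_fiberwise hmap
  have hScard : S.card = n * (Tset n).card := by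
    rw [hS, Finset.card_product, Finset.card_univ, Fintype.card_fin]
  have hfib3 : ∀ X ∈ M, (S.filter (fun s => triple s.1 s.2.1 s.2.2 = X)).card = 3 := by
    intro X hX
    rw [hM, Finset.mem_filter] at hX
    obtain ⟨-, hX3, hMV⟩ := hX
    have hcard : (S.filter (fun s => triple s.1 s.2.1 s.2.2 = X)).card = X.card := by
      apply Finset.card_nbij (fun s => s.1)
      · rintro ⟨a, p, q⟩ hs
        rw [Finset.mem_coe, Finset.mem_filter] at hs
        rw [← hs.2]
        exact Finset.mem_insert_self _ _
      · rintro ⟨a, p, q⟩ hs ⟨a', p', q'⟩ ht hst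
        simp only [Finset.coe_filter, Set.mem_setOf_eq] at hs ht
        obtain ⟨hsS, hsX⟩ := hs
        obtain ⟨htS, htX⟩ := ht
        rw [hS, Finset.mem_product] at hsS htS
        obtain ⟨hp1, hq1, hpq1, -, -, -⟩ := (mem_Tset hn p q).mp hsS.2
        obtain ⟨hp1', hq1', hpq1', -, -, -⟩ := (mem_Tset hn p' q').mp htS.2
        simp only at hst
        subst hst
        -- now a = a', show (p,q) = (p',q')
        have hkey : p = p' ∧ q = q' := by
          have e1 : a + (p : Fin n) ∈ triple a p' q' := by
            rw [htX, ← hsX, triple]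
            exact Finset.mem_insert.mpr (Or.inr (Finset.mem_insert_self _ _))
          have e2 : a + ((p + q : ℕ) : Fin n) ∈ triple a p' q' := by
            rw [htX, ← hsX, triple]
            refine Finset.mem_insert.mpr (Or.inr ?_)
            exact Finset.mem_insert.mpr (Or.inr (Finset.mem_singleton_self _))
          simp only [triple, Finset.mem_insert, Finset.mem_singleton] at e1 e2
          rcases e1 with e1 | e1 | e1
          · exact absurd e1.symm (ne_addCast a (by omega) (by omega))
          · have hpp : p = p' := (addCast_inj (by omega) (by omega)).mp e1
            subst hpp
            rcases e2 with e2 | e2 | e2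
            · exact absurd e2.symm (ne_addCast a (by omega) (by omega))
            · have := (addCast_inj (by omega) (by omega)).mp e2
              omega
            · have := (addCast_inj (by omega) (by omega)).mp e2
              exact ⟨rfl, by omega⟩
          · have hpp : p = p' + q' := (addCast_inj (by omega) (by omega)).mp e1
            rcases e2 with e2 | e2 | e2
            · exact absurd e2.symm (ne_addCast a (by omega) (by omega))
            · have := (addCast_inj (by omega) (by omega)).mp e2
              omega
            · have := (addCast_inj (by omega) (by omega)).mp e2
              omega
        rw [Prod.ext_iff, Prod.ext_iff]
        exact ⟨rfl, hkey.1, hkey.2⟩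
      · -- surjective onto X
        intro x hx
        rw [Finset.mem_coe] at hx
        have hYcard : (X.erase x).card = 2 := by
          rw [Finset.card_erase_of_mem hx, hX3]
        have build : ∀ y z : Fin n, X.erase x = {y, z} →
            (y - x).val < (z - x).val →
            x ∈ (fun s : Fin n × ℕ × ℕ => s.1) ''
              ↑(S.filter (fun s => triple s.1 s.2.1 s.2.2 = X)) := by
          intro y z hY hlt
          have hyX : y ∈ X.erase x := by rw [hY]; exact Finset.mem_insert_self _ _
          have hzX : z ∈ X.erase x := by
            rw [hY]; exact Finset.mem_insert.mpr (Or.inr (Finset.mem_singleton_self _))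
          have hyx : y ≠ x := Finset.ne_of_mem_erase hyX
          have hzx : z ≠ x := Finset.ne_of_mem_erase hzX
          have hdy : 0 < (y - x).val := by
            rcases Nat.eq_zero_or_pos (y - x).val with hh | hh
            · exact absurd (sub_val_eq_zero.mp hh).symm hyx
            · exact hh
          have hdzn : (z - x).val < n := sub_val_lt x z
          set p := (y - x).val with hp
          set q := (z - x).val - (y - x).val with hq
          have htri : triple x p q = X := by
            rw [triple]
            have hpq : p + q = (z - x).val := by omega
            rw [hpq, addCast_sub_val x z, hp, addCast_sub_val x y]
            conv_rhs => rw [← Finset.insert_erase hx, hY]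
          have hp1 : 1 ≤ p := hdy
          have hq1 : 1 ≤ q := by omega
          have hpqn : p + q < n := by omega
          have hmv2 : (cycleGraph n).IsMutualVisibilitySet ↑(triple x p q) := by
            rw [htri]; exact hMV
          obtain ⟨c1, c2, c3⟩ := (triple_mv_iff hn x hp1 hq1 hpqn).mp hmv2
          refine ⟨(x, (p, q)), ?_, rfl⟩
          rw [Finset.mem_coe, Finset.mem_filter]
          refine ⟨?_, htri⟩
          rw [hS, Finset.mem_product]
          exact ⟨Finset.mem_univ _, (mem_Tset hn p q).mpr ⟨hp1, hq1, hpqn, c1, c2, c3⟩⟩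
        obtain ⟨y, z, hyz, hY⟩ := Finset.card_eq_two.mp hYcard
        have hyx : y ≠ x := Finset.ne_of_mem_erase (hY ▸ Finset.mem_insert_self _ _)
        have hzx : z ≠ x := Finset.ne_of_mem_erase
          (hY ▸ Finset.mem_insert.mpr (Or.inr (Finset.mem_singleton_self _)))
        have hdne : (y - x).val ≠ (z - x).val := by
          intro hh
          apply hyz
          have h1 := addCast_sub_val x y
          have h2 := addCast_sub_val x z
          rw [← h1, ← h2, hh]
        rcases lt_or_gt_of_ne hdne with h | h
        · exact build y z hY h
        · exact build z y (by rw [hY, Finset.pair_comm]) h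
    rw [hcard, hX3]
  rw [Finset.sum_congr rfl hfib3, Finset.sum_const, smul_eq_mul] at hfib
  rw [hScard] at hfib
  omega

open scoped Classical in
theorem count_card_eq {n k : ℕ} :
    (Finset.univ.filter (fun X : Finset (Fin n) => X.card = k)).card = n.choose k := by
  rw [← Finset.powerset_univ, ← Finset.powersetCard_eq_filter, Finset.card_powersetCard,
    Finset.card_univ, Fintype.card_fin]

open scoped Classical in
theorem cnt_small {n : ℕ} [NeZero n] (hn : 3 ≤ n) (k : ℕ) (hk : k ≤ 2) :
    (Finset.univ.filter (fun X : Finset (Fin n) =>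
      X.card = k ∧ (cycleGraph n).IsMutualVisibilitySet ↑X)).card = n.choose k := by
  have heq : Finset.univ.filter (fun X : Finset (Fin n) =>
      X.card = k ∧ (cycleGraph n).IsMutualVisibilitySet ↑X)
      = Finset.univ.filter (fun X : Finset (Fin n) => X.card = k) := by
    apply Finset.filter_congr
    intro X _
    constructor
    · exact fun h => h.1
    · exact fun h => ⟨h, mv_of_card_le_two hn X (by omega)⟩
  rw [heq, count_card_eq]

open scoped Classical in
theorem cnt3 {n : ℕ} [NeZero n] (hn : 3 ≤ n) :
    (Finset.univ.filter (fun X : Finset (Fin n) =>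
      X.card = 3 ∧ (cycleGraph n).IsMutualVisibilitySet ↑X)).card =
    (if Odd n then n * (n ^ 2 - 1) / 24 else (n - 2) * n * (n + 8) / 24) := by
  have h3 := count3 hn
  by_cases hodd : Odd n
  · rw [if_pos hodd]
    obtain ⟨k, hk⟩ := hodd
    have hk1 : 1 ≤ k := by omega
    have hT := Tset_card_odd hk1 hk
    have hsq : n^2 - 1 = 4*(k*(k+1)) := by
      have h5 : n^2 = 4*(k*(k+1)) + 1 := by rw [hk]; ring
      omega
    have hchain : n * (n^2 - 1) = 8 * (n * (Tset n).card) := by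
      calc n * (n^2-1) = 4*n*(k*(k+1)) := by rw [hsq]; ring
        _ = 4*n*(2*(Tset n).card) := by rw [hT]
        _ = 8*(n*(Tset n).card) := by ring
    omega
  · rw [if_neg hodd]
    have heven : n % 2 = 0 := Nat.not_odd_iff.mp hodd
    have hk : n = 2*(n/2) := by omega
    set k := n/2 with hkdef
    have hk2 : 2 ≤ k := by omega
    have hT := Tset_card_even hk2 hk
    have hchain : (n-2)*n*(n+8) = 8*(n*(Tset n).card) := by
      calc (n-2)*n*(n+8) = 4*n*((k-1)*(k+4)) := by
            have h1 : n - 2 = 2*(k-1) := by omega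
            have h2 : n + 8 = 2*(k+4) := by omega
            rw [h1, h2]; ring
        _ = 4*n*(2*(Tset n).card) := by rw [hT]
        _ = 8*(n*(Tset n).card) := by ring
    omega

end VisCycle


open VisCycle in
open scoped Classical in
theorem visPoly_cycle (n : ℕ) (hn : 3 ≤ n) :
    visPoly (cycleGraph n) = 1 + (n : Polynomial ℤ) * Polynomial.X +
      ((n.choose 2 : ℕ) : Polynomial ℤ) * Polynomial.X ^ 2 +
      (((if Odd n then n * (n ^ 2 - 1) / 24 else (n - 2) * n * (n + 8) / 24 : ℕ)) :
        Polynomial ℤ) * Polynomial.X ^ 3 ∧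
    (∀ X : Finset (Fin n), (cycleGraph n).IsMutualVisibilitySet ↑X → X.card ≤ 3) ∧
    (∃ X : Finset (Fin n), X.card = 3 ∧ (cycleGraph n).IsMutualVisibilitySet ↑X) := by
  haveI : NeZero n := ⟨by omega⟩
  refine ⟨?_, fun X hX => card_le_three_of_mv hn X hX, ?_⟩
  · -- the polynomial identity
    rw [visPoly]
    have step1 : ∀ X : Finset (Fin n),
        (if (cycleGraph n).IsMutualVisibilitySet ↑X then (Polynomial.X ^ X.card : Polynomial ℤ) else 0)
        = ∑ k ∈ Finset.range 4,
            if X.card = k ∧ (cycleGraph n).IsMutualVisibilitySet ↑X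
            then (Polynomial.X ^ k : Polynomial ℤ) else 0 := by
      intro X
      by_cases hMV : (cycleGraph n).IsMutualVisibilitySet ↑X
      · have hle := card_le_three_of_mv hn X hMV
        simp only [hMV, if_true, and_true]
        rw [Finset.sum_ite_eq (Finset.range 4) X.card (fun k => (Polynomial.X ^ k : Polynomial ℤ))]
        rw [if_pos (Finset.mem_range.mpr (by omega))]
      · simp [hMV]
    rw [Finset.sum_congr rfl (fun X _ => step1 X), Finset.sum_comm]
    have step2 : ∀ k : ℕ, (∑ X : Finset (Fin n),
        if X.card = k ∧ (cycleGraph n).IsMutualVisibilitySet ↑X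
        then (Polynomial.X ^ k : Polynomial ℤ) else 0)
        = ((Finset.univ.filter (fun X : Finset (Fin n) =>
            X.card = k ∧ (cycleGraph n).IsMutualVisibilitySet ↑X)).card)
            • (Polynomial.X ^ k : Polynomial ℤ) := by
      intro k
      rw [← Finset.sum_filter, Finset.sum_const]
    rw [Finset.sum_congr rfl (fun k _ => step2 k)]
    rw [Finset.sum_range_succ, Finset.sum_range_succ, Finset.sum_range_succ,
      Finset.sum_range_one]
    rw [cnt_small hn 0 (by omega), cnt_small hn 1 (by omega), cnt_small hn 2 (by omega),
      cnt3 hn]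
    rw [Nat.choose_zero_right, Nat.choose_one_right]
    simp only [nsmul_eq_mul, pow_zero, pow_one]
    push_cast
    ring
  · -- existence of a mutual-visibility set of size 3
    refine ⟨triple 0 (n/2) ((n - n/2)/2), ?_, ?_⟩
    · exact triple_card hn 0 (by omega) (by omega) (by omega)
    · exact triple_mv hn 0 (by omega) (by omega) (by omega) (by omega) (by omega) (by omega)
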